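/- arXiv:2011.06941 — 2 statements merged into one kernel-verified Lean document; each statement's English description precedes it below -/
import Mathlib

section
/- Let Λ ⊆ ℝ^d be a lattice, N ≥ 1, p₁,…,p_N ∈ (0,∞], and define R_N(p₁,…,p_N) = (Σ_{j=1}^N max(1, 1/p_j)) − min_{1≤j≤N} max(1, 1/p_j). Suppose p₀ ∈ (0,∞] satisfies 1/p₀ ≤ Σ_{j=1}^N 1/p_j − R_N(p₁,…,p_N). Then the N-fold convolution map (a₁,…,a_N) ↦ a₁*⋯*a_N on finitely supported sequences extends uniquely to a continuous map ℓ^{p₁}(Λ) × ⋯ × ℓ^{p_N}(Λ) → ℓ^{p₀}(Λ), and ‖a₁*⋯*a_N‖_{ℓ^{p₀}} ≤ ∏_j ‖a_j‖_{ℓ^{p_j}}. -/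
open scoped BigOperators ENNReal

/-- The (quasi-)norm of `ℓ^p(Λ)` for `p ∈ (0,∞]`. -/
noncomputable def lqnorm {α : Type*} (p : ℝ≥0∞) (f : α → ℂ) : ℝ :=
  if p = ∞ then ⨆ j, ‖f j‖ else (∑' j, ‖f j‖ ^ p.toReal) ^ (1 / p.toReal)

/-- `N+1`-fold convolution of sequences on a discrete additive group. -/
noncomputable def nconv {G : Type*} [AddCommGroup G] :
    (N : ℕ) → (Fin (N + 1) → (G → ℂ)) → (G → ℂ)
  | 0, a => a 0
  | (N + 1), a => fun k => ∑' j, a 0 j * nconv N (fun i => a i.succ) (k - j)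

namespace YoungAux

open MeasureTheory ENNReal
open scoped NNReal

variable {α : Type*} {G : Type*} [AddCommGroup G]

/-- `ℝ≥0∞`-valued analogue of the `ℓ^p` quasinorm. -/
noncomputable def eQ (p : ℝ≥0∞) (h : α → ℝ≥0∞) : ℝ≥0∞ :=
  if p = ∞ then ⨆ j, h j else (∑' j, h j ^ p.toReal) ^ (1 / p.toReal)

theorem eQ_top (h : α → ℝ≥0∞) : eQ ∞ h = ⨆ j, h j := if_pos rfl

theorem eQ_ne_top {p : ℝ≥0∞} (hp : p ≠ ∞) (h : α → ℝ≥0∞) :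
    eQ p h = (∑' j, h j ^ p.toReal) ^ (1 / p.toReal) := if_neg hp

/-- `ℝ≥0∞`-valued convolution. -/
noncomputable def conv (f g : G → ℝ≥0∞) : G → ℝ≥0∞ := fun k => ∑' j, f j * g (k - j)

/-- `ℝ≥0∞`-valued iterated convolution. -/
noncomputable def econv : (N : ℕ) → (Fin (N + 1) → (G → ℝ≥0∞)) → (G → ℝ≥0∞)
  | 0, a => a 0
  | (N + 1), a => conv (a 0) (econv N (fun i => a i.succ))

theorem tsum_sub_left (h : G → ℝ≥0∞) (k : G) : ∑' j, h (k - j) = ∑' j, h j :=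
  (Equiv.subLeft k).tsum_eq h

theorem tsum_sub_right (h : G → ℝ≥0∞) (c : G) : ∑' j, h (j - c) = ∑' j, h j :=
  (Equiv.subRight c).tsum_eq h

theorem conv_comm (f g : G → ℝ≥0∞) : conv f g = conv g f := by
  funext k
  show ∑' j, f j * g (k - j) = ∑' j, g j * f (k - j)
  calc ∑' j, f j * g (k - j) = ∑' j, g (k - j) * f (k - (k - j)) := by
        refine tsum_congr fun j => ?_
        simp [sub_sub_cancel, mul_comm]
    _ = ∑' j, g j * f (k - j) := (Equiv.subLeft k).tsum_eq (fun j => g j * f (k - j))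

/-- Hölder for `tsum` with finitely many factors, in `ℝ≥0∞`. -/
theorem tsum_prod_rpow_le {ι : Type*} (s : Finset ι) (F : ι → α → ℝ≥0∞) (e : ι → ℝ)
    (hsum : ∑ i ∈ s, e i = 1) (he : ∀ i ∈ s, 0 ≤ e i) :
    ∑' a, ∏ i ∈ s, F i a ^ e i ≤ ∏ i ∈ s, (∑' a, F i a) ^ e i := by
  letI : MeasurableSpace α := ⊤
  haveI : MeasurableSingletonClass α := ⟨fun _ => MeasurableSpace.measurableSet_top⟩
  have key := ENNReal.lintegral_prod_norm_pow_le (μ := Measure.count) s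
    (f := F) (fun i _ => (Measurable.aemeasurable (fun _ _ => MeasurableSpace.measurableSet_top)))
    hsum he
  rw [lintegral_count] at key
  refine key.trans ?_
  refine Finset.prod_le_prod (fun i _ => zero_le) (fun i hi => ?_)
  rw [lintegral_count]

/-- Binary superadditivity of `rpow` for exponent `≥ 1`. -/
theorem rpow_add_rpow_le' {t : ℝ} (ht : 1 ≤ t) (x y : ℝ≥0∞) :
    x ^ t + y ^ t ≤ (x + y) ^ t := by
  have ht0 : 0 < t := lt_of_lt_of_le one_pos ht
  have h1t : 0 ≤ 1 / t := by positivity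
  have h := ENNReal.rpow_add_le_add_rpow (x ^ t) (y ^ t) h1t (by
    rw [div_le_one ht0]; exact ht)
  have hx : (x ^ t) ^ (1/t) = x := by
    rw [← ENNReal.rpow_mul, mul_one_div_cancel ht0.ne', ENNReal.rpow_one]
  have hy : (y ^ t) ^ (1/t) = y := by
    rw [← ENNReal.rpow_mul, mul_one_div_cancel ht0.ne', ENNReal.rpow_one]
  calc x ^ t + y ^ t = ((x ^ t + y ^ t) ^ (1/t)) ^ t := by
        rw [← ENNReal.rpow_mul, one_div_mul_cancel ht0.ne', ENNReal.rpow_one]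
    _ ≤ ((x ^ t) ^ (1/t) + (y ^ t) ^ (1/t)) ^ t := ENNReal.rpow_le_rpow h ht0.le
    _ = (x + y) ^ t := by rw [hx, hy]

theorem sum_rpow_le {ι : Type*} {t : ℝ} (ht : 1 ≤ t) (s : Finset ι) (x : ι → ℝ≥0∞) :
    ∑ i ∈ s, x i ^ t ≤ (∑ i ∈ s, x i) ^ t := by
  classical
  induction s using Finset.induction with
  | empty => simp [ENNReal.zero_rpow_of_pos (lt_of_lt_of_le one_pos ht)]
  | insert _ _ hni ih =>
    rw [Finset.sum_insert hni, Finset.sum_insert hni]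
    exact le_trans (add_le_add_right ih _) (rpow_add_rpow_le' ht _ _)

/-- `(∑' x)^m ≤ ∑' x^m` for `0 < m ≤ 1`. -/
theorem tsum_rpow_le {m : ℝ} (hm0 : 0 < m) (hm1 : m ≤ 1) (h : α → ℝ≥0∞) :
    (∑' a, h a) ^ m ≤ ∑' a, h a ^ m := by
  have key : ∑' a, h a ≤ (∑' a, h a ^ m) ^ (1/m) := by
    rw [ENNReal.tsum_eq_iSup_sum]
    refine iSup_le fun s => ?_
    have h1m : 1 ≤ 1/m := by rw [le_div_iff₀ hm0]; simpa using hm1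
    calc ∑ a ∈ s, h a = ∑ a ∈ s, (h a ^ m) ^ (1/m) := by
          refine Finset.sum_congr rfl fun a _ => ?_
          rw [← ENNReal.rpow_mul, mul_one_div_cancel hm0.ne', ENNReal.rpow_one]
      _ ≤ (∑ a ∈ s, h a ^ m) ^ (1/m) := sum_rpow_le h1m s _
      _ ≤ (∑' a, h a ^ m) ^ (1/m) :=
          ENNReal.rpow_le_rpow (ENNReal.sum_le_tsum s) (by positivity)
  calc (∑' a, h a) ^ m ≤ ((∑' a, h a ^ m) ^ (1/m)) ^ m := ENNReal.rpow_le_rpow key hm0.le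
    _ = ∑' a, h a ^ m := by
        rw [← ENNReal.rpow_mul, one_div_mul_cancel hm0.ne', ENNReal.rpow_one]

/-- The `ℓ^p` quasinorms are non-increasing in `p` (finite exponents, real form). -/
theorem tsum_rpow_mono {t s : ℝ} (ht : 0 < t) (hts : t ≤ s) (h : α → ℝ≥0∞) :
    (∑' a, h a ^ s) ^ (1/s) ≤ (∑' a, h a ^ t) ^ (1/t) := by
  have hs : 0 < s := lt_of_lt_of_le ht hts
  set A := ∑' a, h a ^ t with hA
  by_cases hAtop : A = ∞
  · rw [hAtop, ENNReal.top_rpow_of_pos (by positivity)]; exact le_top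
  have hst1 : (0:ℝ) ≤ s/t - 1 := by
    rw [sub_nonneg, le_div_iff₀ ht]; simpa using hts
  have key : ∑' a, h a ^ s ≤ A ^ (s/t) := by
    have hpt : ∀ a, h a ^ s ≤ (h a ^ t) * A ^ (s/t - 1) := by
      intro a
      have h1 : h a ^ s = (h a ^ t) ^ (s/t) := by
        rw [← ENNReal.rpow_mul, mul_div_cancel₀ s ht.ne']
      have h2 : (h a ^ t) ^ (s/t) = (h a ^ t) * (h a ^ t) ^ (s/t - 1) := by
        nth_rewrite 2 [← ENNReal.rpow_one (h a ^ t)]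
        rw [← ENNReal.rpow_add_of_nonneg _ _ zero_le_one hst1]
        ring_nf
      rw [h1, h2]
      exact mul_le_mul_right (ENNReal.rpow_le_rpow (ENNReal.le_tsum a) hst1) _
    calc ∑' a, h a ^ s ≤ ∑' a, (h a ^ t) * A ^ (s/t - 1) := ENNReal.tsum_le_tsum hpt
      _ = A * A ^ (s/t - 1) := by rw [ENNReal.tsum_mul_right]
      _ = A ^ (s/t) := by
          nth_rewrite 1 [← ENNReal.rpow_one A]
          rw [← ENNReal.rpow_add_of_nonneg _ _ zero_le_one hst1]
          ring_nf
  calc (∑' a, h a ^ s) ^ (1/s) ≤ (A ^ (s/t)) ^ (1/s) :=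
        ENNReal.rpow_le_rpow key (by positivity)
    _ = A ^ (1/t) := by
        rw [← ENNReal.rpow_mul]
        congr 1
        field_simp

/-- Monotonicity of `eQ` in the exponent. -/
theorem eQ_mono_exp {p q : ℝ≥0∞} (hp : 0 < p) (hpq : p ≤ q) (h : α → ℝ≥0∞) :
    eQ q h ≤ eQ p h := by
  by_cases hptop : p = ∞
  · subst hptop; rw [top_le_iff.mp hpq]
  have hpt : 0 < p.toReal := ENNReal.toReal_pos hp.ne' hptop
  rw [eQ_ne_top hptop]
  by_cases hqtop : q = ∞
  · rw [hqtop, eQ_top]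
    refine iSup_le fun a => ?_
    calc h a = (h a ^ p.toReal) ^ (1/p.toReal) := by
          rw [← ENNReal.rpow_mul, mul_one_div_cancel hpt.ne', ENNReal.rpow_one]
      _ ≤ (∑' b, h b ^ p.toReal) ^ (1/p.toReal) :=
          ENNReal.rpow_le_rpow (ENNReal.le_tsum a) (by positivity)
  · rw [eQ_ne_top hqtop]
    exact tsum_rpow_mono hpt (ENNReal.toReal_mono hqtop hpq) h

/-- Pointwise monotonicity of `eQ`. -/
theorem eQ_mono {p : ℝ≥0∞} {h h' : α → ℝ≥0∞} (hle : ∀ x, h x ≤ h' x) :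
    eQ p h ≤ eQ p h' := by
  unfold eQ
  split
  · exact iSup_mono hle
  · exact ENNReal.rpow_le_rpow
      (ENNReal.tsum_le_tsum fun x => ENNReal.rpow_le_rpow (hle x) ENNReal.toReal_nonneg)
      (by positivity)

/-- Classical Young's convolution inequality in `ℝ≥0∞`, exact scaling case. -/
theorem young_core (f g : G → ℝ≥0∞) {P Q R : ℝ} (hP : 1 ≤ P) (hQ : 1 ≤ Q) (hR : 1 ≤ R)
    (hpqr : 1/P + 1/Q = 1 + 1/R) :
    (∑' k, (conv f g k) ^ R) ^ (1/R) ≤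
      (∑' j, f j ^ P) ^ (1/P) * (∑' j, g j ^ Q) ^ (1/Q) := by
  have hP0 : 0 < P := lt_of_lt_of_le one_pos hP
  have hQ0 : 0 < Q := lt_of_lt_of_le one_pos hQ
  have hR0 : 0 < R := lt_of_lt_of_le one_pos hR
  obtain ⟨e1, he1def⟩ : ∃ x : ℝ, x = 1/R := ⟨_, rfl⟩
  obtain ⟨e2, he2def⟩ : ∃ x : ℝ, x = 1/P - 1/R := ⟨_, rfl⟩
  obtain ⟨e3, he3def⟩ : ∃ x : ℝ, x = 1/Q - 1/R := ⟨_, rfl⟩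
  have he1 : 0 ≤ e1 := by rw [he1def]; positivity
  have he2 : 0 ≤ e2 := by
    have h1 : 1/Q ≤ 1 := by rw [div_le_one hQ0]; exact hQ
    rw [he2def]; linarith
  have he3 : 0 ≤ e3 := by
    have h1 : 1/P ≤ 1 := by rw [div_le_one hP0]; exact hP
    rw [he3def]; linarith
  set A := ∑' j, f j ^ P with hA
  set B := ∑' j, g j ^ Q with hB
  -- pointwise factorization
  have key : ∀ x y : ℝ≥0∞, x * y = (x ^ P * y ^ Q) ^ e1 * (x ^ P) ^ e2 * (y ^ Q) ^ e3 := by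
    intro x y
    rw [ENNReal.mul_rpow_of_nonneg _ _ he1, ← ENNReal.rpow_mul, ← ENNReal.rpow_mul,
      ← ENNReal.rpow_mul, ← ENNReal.rpow_mul]
    calc x * y = x ^ (P * e1 + P * e2) * y ^ (Q * e1 + Q * e3) := by
          have h1 : P * e1 + P * e2 = 1 := by rw [he1def, he2def]; field_simp; ring
          have h2 : Q * e1 + Q * e3 = 1 := by rw [he1def, he3def]; field_simp; ring
          rw [h1, h2, ENNReal.rpow_one, ENNReal.rpow_one]
      _ = x ^ (P * e1) * x ^ (P * e2) * (y ^ (Q * e1) * y ^ (Q * e3)) := by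
          rw [ENNReal.rpow_add_of_nonneg _ _ (by positivity) (by positivity),
            ENNReal.rpow_add_of_nonneg _ _ (by positivity) (by positivity)]
      _ = x ^ (P * e1) * y ^ (Q * e1) * x ^ (P * e2) * y ^ (Q * e3) := by ring
  -- Hölder in `j`, for each `k`
  have step1 : ∀ k, conv f g k ≤ (∑' j, f j ^ P * g (k - j) ^ Q) ^ e1 * A ^ e2 * B ^ e3 := by
    intro k
    have hH := tsum_prod_rpow_le (Finset.univ : Finset (Fin 3))
      (F := ![fun j => f j ^ P * g (k - j) ^ Q, fun j => f j ^ P, fun j => g (k - j) ^ Q])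
      (e := ![e1, e2, e3])
      (by
        rw [Fin.sum_univ_three]
        simp only [Matrix.cons_val_zero, Matrix.cons_val_one, Matrix.head_cons,
          Matrix.cons_val_two, Matrix.tail_cons]
        rw [he1def, he2def, he3def]; linarith)
      (by
        intro i _
        fin_cases i <;>
          simp only [Matrix.cons_val_zero, Matrix.cons_val_one, Matrix.head_cons,
            Matrix.cons_val_two, Matrix.tail_cons, Fin.mk_one, Fin.mk_zero] <;>
          assumption)
    rw [show conv f g k = ∑' j, f j * g (k - j) from rfl]
    simp only [Fin.prod_univ_three, Matrix.cons_val_zero, Matrix.cons_val_one,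
      Matrix.head_cons, Matrix.cons_val_two, Matrix.tail_cons] at hH
    calc ∑' j, f j * g (k - j)
        = ∑' j, (f j ^ P * g (k - j) ^ Q) ^ e1 * (f j ^ P) ^ e2 * (g (k - j) ^ Q) ^ e3 :=
          tsum_congr fun j => key (f j) (g (k - j))
      _ ≤ (∑' j, f j ^ P * g (k - j) ^ Q) ^ e1 * (∑' j, f j ^ P) ^ e2 *
            (∑' j, g (k - j) ^ Q) ^ e3 := hH
      _ = (∑' j, f j ^ P * g (k - j) ^ Q) ^ e1 * A ^ e2 * B ^ e3 := by
          rw [tsum_sub_left (fun j => g j ^ Q) k]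
  -- sum over `k`
  have fub : ∑' k, (∑' j, f j ^ P * g (k - j) ^ Q) = A * B := by
    rw [ENNReal.tsum_comm]
    calc ∑' j, ∑' k, f j ^ P * g (k - j) ^ Q
        = ∑' j, f j ^ P * ∑' k, g (k - j) ^ Q :=
          tsum_congr fun j => ENNReal.tsum_mul_left
      _ = ∑' j, f j ^ P * B := by
          refine tsum_congr fun j => ?_
          rw [tsum_sub_right (fun k => g k ^ Q) j]
      _ = A * B := ENNReal.tsum_mul_right
  have step2 : ∑' k, (conv f g k) ^ R ≤ A ^ (R/P) * B ^ (R/Q) := by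
    calc ∑' k, (conv f g k) ^ R
        ≤ ∑' k, ((∑' j, f j ^ P * g (k - j) ^ Q) ^ e1 * A ^ e2 * B ^ e3) ^ R :=
          ENNReal.tsum_le_tsum fun k => ENNReal.rpow_le_rpow (step1 k) hR0.le
      _ = ∑' k, (∑' j, f j ^ P * g (k - j) ^ Q) * (A ^ (e2 * R) * B ^ (e3 * R)) := by
          refine tsum_congr fun k => ?_
          simp only [ENNReal.mul_rpow_of_nonneg _ _ hR0.le, ← ENNReal.rpow_mul]
          rw [show e1 * R = 1 by rw [he1def]; field_simp, ENNReal.rpow_one, mul_assoc]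
      _ = (A * B) * (A ^ (e2 * R) * B ^ (e3 * R)) := by rw [ENNReal.tsum_mul_right, fub]
      _ = A ^ (R/P) * B ^ (R/Q) := by
          nth_rewrite 1 [← ENNReal.rpow_one A]
          nth_rewrite 1 [← ENNReal.rpow_one B]
          rw [show A ^ (1:ℝ) * B ^ (1:ℝ) * (A ^ (e2 * R) * B ^ (e3 * R))
              = (A ^ (1:ℝ) * A ^ (e2 * R)) * (B ^ (1:ℝ) * B ^ (e3 * R)) by ring,
            ← ENNReal.rpow_add_of_nonneg _ _ zero_le_one (by positivity),
            ← ENNReal.rpow_add_of_nonneg _ _ zero_le_one (by positivity)]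
          congr 1
          · congr 1
            rw [he2def]; field_simp; ring
          · congr 1
            rw [he3def]; field_simp; ring
  calc (∑' k, (conv f g k) ^ R) ^ (1/R) ≤ (A ^ (R/P) * B ^ (R/Q)) ^ (1/R) :=
        ENNReal.rpow_le_rpow step2 (by positivity)
    _ = A ^ (1/P) * B ^ (1/Q) := by
        rw [ENNReal.mul_rpow_of_nonneg _ _ (by positivity), ← ENNReal.rpow_mul,
          ← ENNReal.rpow_mul]
        congr 1 <;> · congr 1; field_simp

/-- Hölder's inequality for `tsum` in `ℝ≥0∞`. -/
theorem tsum_mul_le_Lp_mul_Lq (f g : α → ℝ≥0∞) {P Q : ℝ} (hP : 0 < P) (hQ : 0 < Q)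
    (hpq : 1/P + 1/Q = 1) :
    ∑' a, f a * g a ≤ (∑' a, f a ^ P) ^ (1/P) * (∑' a, g a ^ Q) ^ (1/Q) := by
  have hH := tsum_prod_rpow_le (Finset.univ : Finset (Fin 2))
    (F := ![fun a => f a ^ P, fun a => g a ^ Q]) (e := ![1/P, 1/Q])
    (by
      rw [Fin.sum_univ_two]
      simp only [Matrix.cons_val_zero, Matrix.cons_val_one, Matrix.head_cons]
      exact hpq)
    (by intro i _; fin_cases i <;> simp <;> positivity)
  simp only [Fin.prod_univ_two, Matrix.cons_val_zero, Matrix.cons_val_one,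
    Matrix.head_cons] at hH
  refine le_trans (le_of_eq (tsum_congr fun a => ?_)) hH
  rw [← ENNReal.rpow_mul, ← ENNReal.rpow_mul, mul_one_div_cancel hP.ne',
    mul_one_div_cancel hQ.ne', ENNReal.rpow_one, ENNReal.rpow_one]

/-- Convolution bound for a common exponent `≤ 1`. -/
theorem conv_le_small {s : ℝ} (hs0 : 0 < s) (hs1 : s ≤ 1) (f g : G → ℝ≥0∞) :
    ∑' k, (conv f g k) ^ s ≤ (∑' j, f j ^ s) * (∑' j, g j ^ s) := by
  calc ∑' k, (conv f g k) ^ s ≤ ∑' k, ∑' j, (f j * g (k - j)) ^ s :=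
        ENNReal.tsum_le_tsum fun k => tsum_rpow_le hs0 hs1 _
    _ = ∑' j, ∑' k, f j ^ s * g (k - j) ^ s := by
        rw [ENNReal.tsum_comm]
        exact tsum_congr fun j => tsum_congr fun k => ENNReal.mul_rpow_of_nonneg _ _ hs0.le
    _ = ∑' j, f j ^ s * ∑' k, g (k - j) ^ s := tsum_congr fun j => ENNReal.tsum_mul_left
    _ = ∑' j, f j ^ s * ∑' k, g k ^ s := by
        refine tsum_congr fun j => ?_
        rw [tsum_sub_right (fun k => g k ^ s) j]
    _ = (∑' j, f j ^ s) * (∑' j, g j ^ s) := ENNReal.tsum_mul_right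

theorem eQ_one (f : α → ℝ≥0∞) : eQ 1 f = ∑' j, f j := by
  rw [eQ_ne_top (by simp)]
  simp [ENNReal.rpow_one]

/-- The two-exponent quasi-Banach Young inequality, assuming `p ≤ q`. -/
theorem binary_aux (f g : G → ℝ≥0∞) {p q r : ℝ≥0∞} (hp : 0 < p) (hq : 0 < q) (hr : 0 < r)
    (hpq : p ≤ q) (H : 1/r + max 1 (1/p) ≤ 1/p + 1/q) :
    eQ r (conv f g) ≤ eQ p f * eQ q g := by
  have h1p : (1/p) ≠ ∞ := by rw [one_div]; exact ENNReal.inv_ne_top.mpr hp.ne'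
  have h1q : (1/q) ≠ ∞ := by rw [one_div]; exact ENNReal.inv_ne_top.mpr hq.ne'
  by_cases hqt : q = ∞
  · subst hqt
    rw [show (1:ℝ≥0∞)/∞ = 0 by simp, add_zero] at H
    have hM : max 1 (1/p) ≤ 1/p := le_trans (le_add_self) H
    have hp1 : p ≤ 1 := by
      have h2 : 1 ≤ p⁻¹ := by
        rw [← one_div]; exact le_trans (le_max_left 1 (1/p)) hM
      exact ENNReal.one_le_inv.mp h2
    have h1r : 1/r = 0 := by
      have h3 : 1/r + max 1 (1/p) ≤ 0 + max 1 (1/p) := by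
        rw [zero_add]; exact le_trans H (le_max_right 1 (1/p))
      have hMne : max 1 (1/p) ≠ ∞ := by
        simp only [ne_eq, max_eq_top, not_or]
        exact ⟨ENNReal.one_ne_top, h1p⟩
      exact le_antisymm ((ENNReal.add_le_add_iff_right hMne).mp h3) (zero_le)
    have hrt : r = ∞ := by rwa [one_div, ENNReal.inv_eq_zero] at h1r
    subst hrt
    rw [eQ_top, eQ_top]
    refine iSup_le fun k => ?_
    calc conv f g k = ∑' j, f j * g (k - j) := rfl
      _ ≤ ∑' j, f j * ⨆ i, g i :=
          ENNReal.tsum_le_tsum fun j => mul_le_mul_right (le_iSup g (k - j)) _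
      _ = (∑' j, f j) * ⨆ i, g i := ENNReal.tsum_mul_right
      _ ≤ eQ p f * ⨆ i, g i := by
          rw [← eQ_one]
          exact mul_le_mul_left (eQ_mono_exp hp hp1 f) _
  · have hpt : p ≠ ∞ := fun h => hqt (top_le_iff.mp (h ▸ hpq))
    have hQ0 : 0 < q.toReal := ENNReal.toReal_pos hq.ne' hqt
    by_cases hp1 : p ≤ 1
    · have h1lep : (1:ℝ≥0∞) ≤ 1/p := by rw [one_div]; exact ENNReal.one_le_inv.mpr hp1
      rw [max_eq_right h1lep] at H
      have hrq : 1/r ≤ 1/q := by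
        rw [add_comm (1/p) (1/q)] at H
        exact (ENNReal.add_le_add_iff_right h1p).mp H
      have hqr : q ≤ r := by
        rw [one_div, one_div] at hrq
        exact ENNReal.inv_le_inv.mp hrq
      refine le_trans (eQ_mono_exp hq hqr _) ?_
      by_cases hq1 : q ≤ 1
      · have hs1 : q.toReal ≤ 1 := by
          have := ENNReal.toReal_mono ENNReal.one_ne_top hq1
          simpa using this
        calc eQ q (conv f g) = (∑' k, conv f g k ^ q.toReal) ^ (1/q.toReal) :=
              eQ_ne_top hqt _
          _ ≤ ((∑' j, f j ^ q.toReal) * (∑' j, g j ^ q.toReal)) ^ (1/q.toReal) :=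
              ENNReal.rpow_le_rpow (conv_le_small hQ0 hs1 f g) (by positivity)
          _ = eQ q f * eQ q g := by
              rw [ENNReal.mul_rpow_of_nonneg _ _ (by positivity),
                eQ_ne_top hqt, eQ_ne_top hqt]
          _ ≤ eQ p f * eQ q g := mul_le_mul_left (eQ_mono_exp hp hpq f) _
      · have hs1 : 1 ≤ q.toReal := by
          have := ENNReal.toReal_mono hqt (not_le.mp hq1).le
          simpa using this
        have hy := young_core f g (le_refl (1:ℝ)) hs1 hs1 (by norm_num)
        calc eQ q (conv f g) = (∑' k, conv f g k ^ q.toReal) ^ (1/q.toReal) :=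
              eQ_ne_top hqt _
          _ ≤ (∑' j, f j ^ (1:ℝ)) ^ (1/(1:ℝ)) * (∑' j, g j ^ q.toReal) ^ (1/q.toReal) := hy
          _ = (∑' j, f j) * eQ q g := by
              rw [eQ_ne_top hqt]
              congr 1
              simp [ENNReal.rpow_one]
          _ ≤ eQ p f * eQ q g := by
              rw [← eQ_one]
              exact mul_le_mul_left (eQ_mono_exp hp hp1 f) _
    · have hp1' : 1 < p := not_le.mp hp1
      have hM : max 1 (1/p) = 1 := max_eq_left (by rw [one_div]; exact ENNReal.inv_le_one.mpr hp1'.le)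
      rw [hM] at H
      have h1le : (1:ℝ≥0∞) ≤ 1/p + 1/q := le_trans (by nth_rewrite 1 [← zero_add (1:ℝ≥0∞)]; exact add_le_add (zero_le) le_rfl) H
      have hcr : 1/r ≤ (1/p + 1/q) - 1 := (ENNReal.cancel_of_ne ENNReal.one_ne_top).le_tsub_of_add_le_right H
      have hc1 : (1/p + 1/q) - 1 ≤ 1 := by
        rw [tsub_le_iff_right]
        refine add_le_add ?_ ?_
        · rw [one_div]; exact ENNReal.inv_le_one.mpr hp1'.le
        · rw [one_div]; exact ENNReal.inv_le_one.mpr (le_trans hp1'.le hpq)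
      have hcnet : (1/p + 1/q) - 1 ≠ ∞ := (lt_of_le_of_lt hc1 ENNReal.one_lt_top).ne
      have hP0 : 0 < p.toReal := ENNReal.toReal_pos hp.ne' hpt
      have hP1 : 1 ≤ p.toReal := by
        have := ENNReal.toReal_mono hpt hp1'.le
        simpa using this
      have hQ1 : 1 ≤ q.toReal := by
        have := ENNReal.toReal_mono hqt (le_trans hp1'.le hpq)
        simpa using this
      by_cases hc0 : (1/p + 1/q) - 1 = 0
      · have h1r : 1/r = 0 := le_antisymm (hc0 ▸ hcr) (zero_le)
        have hrt : r = ∞ := by rwa [one_div, ENNReal.inv_eq_zero] at h1r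
        subst hrt
        have heq : 1/p + 1/q = 1 := le_antisymm (tsub_eq_zero_iff_le.mp hc0) h1le
        have e1 : ((1:ℝ≥0∞)/p).toReal = 1/p.toReal := by
          simp only [one_div, ENNReal.toReal_inv]
        have e2 : ((1:ℝ≥0∞)/q).toReal = 1/q.toReal := by
          simp only [one_div, ENNReal.toReal_inv]
        have hPQ : 1/p.toReal + 1/q.toReal = 1 := by
          have h2 := congrArg ENNReal.toReal heq
          rwa [ENNReal.toReal_add h1p h1q, ENNReal.toReal_one, e1, e2] at h2
        rw [eQ_top]
        refine iSup_le fun k => ?_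
        have hH := tsum_mul_le_Lp_mul_Lq f (fun j => g (k - j)) hP0 hQ0 hPQ
        calc conv f g k ≤ (∑' j, f j ^ p.toReal) ^ (1/p.toReal) *
              (∑' j, g (k - j) ^ q.toReal) ^ (1/q.toReal) := hH
          _ = eQ p f * eQ q g := by
              rw [tsum_sub_left (fun j => g j ^ q.toReal) k, eQ_ne_top hpt, eQ_ne_top hqt]
      · have hρpos : (0:ℝ≥0∞) < 1/((1/p + 1/q) - 1) := by
          rw [one_div]; exact ENNReal.inv_pos.mpr hcnet
        have hcR : 0 < ((1/p + 1/q) - 1).toReal := ENNReal.toReal_pos hc0 hcnet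
        have hcR1 : ((1/p + 1/q) - 1).toReal ≤ 1 := by
          have := ENNReal.toReal_mono ENNReal.one_ne_top hc1
          simpa using this
        have hR1 : 1 ≤ 1/((1/p + 1/q) - 1).toReal := by
          rw [le_div_iff₀ hcR, one_mul]; exact hcR1
        have e1 : ((1:ℝ≥0∞)/p).toReal = 1/p.toReal := by
          simp only [one_div, ENNReal.toReal_inv]
        have e2 : ((1:ℝ≥0∞)/q).toReal = 1/q.toReal := by
          simp only [one_div, ENNReal.toReal_inv]
        have hpqr : 1/p.toReal + 1/q.toReal = 1 + 1/(1/((1/p + 1/q) - 1).toReal) := by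
          have hce : ((1/p + 1/q) - 1) + 1 = 1/p + 1/q := tsub_add_cancel_of_le h1le
          have h2 := congrArg ENNReal.toReal hce
          rw [ENNReal.toReal_add hcnet ENNReal.one_ne_top,
            ENNReal.toReal_add h1p h1q, ENNReal.toReal_one, e1, e2] at h2
          rw [one_div_one_div]
          linarith
        have hy := young_core f g hP1 hQ1 hR1 hpqr
        have hr0r : 1/((1/p + 1/q) - 1) ≤ r := by
          have h2 : ((1/p + 1/q) - 1)⁻¹ ≤ (r⁻¹)⁻¹ :=
            ENNReal.inv_le_inv.mpr (by rwa [one_div] at hcr)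
          rwa [inv_inv, ← one_div] at h2
        have h1c : 1/((1/p + 1/q) - 1) ≠ ∞ := by
          rw [one_div]; exact ENNReal.inv_ne_top.mpr hc0
        have htoR : (1/((1/p + 1/q) - 1)).toReal = 1/((1/p + 1/q) - 1).toReal := by
          simp only [one_div, ENNReal.toReal_inv]
        calc eQ r (conv f g) ≤ eQ (1/((1/p + 1/q) - 1)) (conv f g) :=
              eQ_mono_exp hρpos hr0r _
          _ = (∑' k, conv f g k ^ (1/((1/p + 1/q) - 1).toReal)) ^
                (1/(1/((1/p + 1/q) - 1).toReal)) := by rw [eQ_ne_top h1c, htoR]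
          _ ≤ (∑' j, f j ^ p.toReal) ^ (1/p.toReal) *
                (∑' j, g j ^ q.toReal) ^ (1/q.toReal) := hy
          _ = eQ p f * eQ q g := by rw [eQ_ne_top hpt, eQ_ne_top hqt]

/-- The two-exponent quasi-Banach Young inequality. -/
theorem binary (f g : G → ℝ≥0∞) {p q r : ℝ≥0∞} (hp : 0 < p) (hq : 0 < q) (hr : 0 < r)
    (H : 1/r + max (max 1 (1/p)) (max 1 (1/q)) ≤ 1/p + 1/q) :
    eQ r (conv f g) ≤ eQ p f * eQ q g := by
  rcases le_total p q with hpq | hpq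
  · have hmax : max (max 1 (1/p)) (max 1 (1/q)) = max 1 (1/p) :=
      max_eq_left (max_le (le_max_left _ _)
        (le_trans (by rw [one_div, one_div]; exact ENNReal.inv_le_inv' hpq) (le_max_right _ _)))
    rw [hmax] at H
    exact binary_aux f g hp hq hr hpq H
  · have hmax : max (max 1 (1/p)) (max 1 (1/q)) = max 1 (1/q) :=
      max_eq_right (max_le (le_max_left _ _)
        (le_trans (by rw [one_div, one_div]; exact ENNReal.inv_le_inv' hpq) (le_max_right _ _)))
    rw [hmax, add_comm (1/p) (1/q)] at H
    rw [conv_comm, mul_comm]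
    exact binary_aux g f hq hp hr hpq H

theorem iInf_fin_succ {n : ℕ} (f : Fin (n + 1) → ℝ≥0∞) :
    ⨅ j, f j = f 0 ⊓ ⨅ j : Fin n, f j.succ := by
  apply le_antisymm
  · exact le_inf (iInf_le _ 0) (le_iInf fun j => iInf_le _ j.succ)
  · refine le_iInf fun j => ?_
    refine Fin.cases ?_ (fun j => ?_) j
    · exact inf_le_left
    · exact le_trans inf_le_right (iInf_le _ j)

theorem max_add_min' (a b : ℝ≥0∞) : max a b + min a b = a + b := by
  rcases le_total a b with h | h
  · rw [max_eq_right h, min_eq_left h, add_comm]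
  · rw [max_eq_left h, min_eq_right h]

/-- The `N`-fold quasi-Banach Young inequality in `ℝ≥0∞`. -/
theorem young_enn : ∀ (N : ℕ) (p : Fin (N + 1) → ℝ≥0∞) (p₀ : ℝ≥0∞),
    (∀ j, 0 < p j) → 0 < p₀ →
    (1 / p₀ + ∑ j, max 1 (1 / p j) ≤ (∑ j, 1 / p j) + ⨅ j, max 1 (1 / p j)) →
    ∀ F : Fin (N + 1) → G → ℝ≥0∞, eQ p₀ (econv N F) ≤ ∏ j, eQ (p j) (F j)
  | 0, p, p₀, hp, hp₀, hy, F => by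
    rw [Fin.sum_univ_succ (fun j : Fin 1 => max 1 (1 / p j)),
      Fin.sum_univ_succ (fun j : Fin 1 => 1 / p j),
      iInf_fin_succ (fun j : Fin 1 => max 1 (1 / p j))] at hy
    simp only [Finset.univ_eq_empty, Finset.sum_empty, add_zero, iInf_of_empty,
      inf_top_eq] at hy
    have hMne : max 1 (1 / p 0) ≠ ∞ := by
      simp only [ne_eq, max_eq_top, not_or]
      exact ⟨ENNReal.one_ne_top, by
        rw [one_div]; exact ENNReal.inv_ne_top.mpr (hp _).ne'⟩
    have h1 : 1 / p₀ ≤ 1 / p 0 :=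
      (ENNReal.add_le_add_iff_right hMne).mp hy
    have hle : p 0 ≤ p₀ := by
      rw [one_div, one_div] at h1; exact ENNReal.inv_le_inv.mp h1
    refine le_trans (eQ_mono_exp (hp 0) hle (F 0)) ?_
    rw [Fin.prod_univ_succ (fun j : Fin 1 => eQ (p j) (F j))]
    simp only [Finset.univ_eq_empty, Finset.prod_empty, mul_one]
    exact le_rfl
  | (N + 1), p, p₀, hp, hp₀, hy, F => by
    have hti : ∀ j : Fin (N + 1), 0 < p j.succ := fun j => hp j.succ
    rw [Fin.sum_univ_succ (fun j : Fin (N + 2) => max 1 (1 / p j)),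
      Fin.sum_univ_succ (fun j : Fin (N + 2) => 1 / p j),
      iInf_fin_succ (fun j : Fin (N + 2) => max 1 (1 / p j))] at hy
    -- abbreviations
    have h1p0 : (1 : ℝ≥0∞) / p 0 ≠ ∞ := by
      rw [one_div]; exact ENNReal.inv_ne_top.mpr (hp 0).ne'
    have hune : max 1 (1 / p 0) ≠ ∞ := by
      simp only [ne_eq, max_eq_top, not_or]; exact ⟨ENNReal.one_ne_top, h1p0⟩
    have hYne : (∑ j : Fin (N + 1), max 1 (1 / p j.succ)) ≠ ∞ := by
      refine (ENNReal.sum_lt_top.mpr fun j _ => ?_).ne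
      simp only [lt_top_iff_ne_top, ne_eq, max_eq_top, not_or]
      exact ⟨ENNReal.one_ne_top, by
        rw [one_div]; exact ENNReal.inv_ne_top.mpr (hp _).ne'⟩
    have hSne : (∑ j : Fin (N + 1), 1 / p j.succ) ≠ ∞ := by
      refine (ENNReal.sum_lt_top.mpr fun j _ => ?_).ne
      rw [lt_top_iff_ne_top, one_div]
      exact ENNReal.inv_ne_top.mpr (hp _).ne'
    have hine : (⨅ j : Fin (N + 1), max 1 (1 / p j.succ)) ≠ ∞ := by
      refine ((iInf_le _ 0).trans_lt ?_).ne
      simp only [lt_top_iff_ne_top, ne_eq, max_eq_top, not_or]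
      exact ⟨ENNReal.one_ne_top, by
        rw [one_div]; exact ENNReal.inv_ne_top.mpr (hp _).ne'⟩
    set u := max 1 (1 / p 0) with hu
    set Y := ∑ j : Fin (N + 1), max 1 (1 / p j.succ) with hY
    set S := ∑ j : Fin (N + 1), 1 / p j.succ with hS
    set i := ⨅ j : Fin (N + 1), max 1 (1 / p j.succ) with hi
    -- hy : 1/p₀ + (u + Y) ≤ (1/p 0 + S) + (u ⊓ i)
    have h1i : 1 ≤ i := le_iInf fun j => le_max_left _ _
    have hSY : S ≤ Y := Finset.sum_le_sum fun j _ => le_max_right _ _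
    have hYX : Y ≤ S + i := by
      have h2 : u + Y ≤ u + (S + i) := by
        calc u + Y ≤ 1 / p₀ + (u + Y) := by
              nth_rewrite 1 [← zero_add (u + Y)]
              exact add_le_add (zero_le) le_rfl
          _ ≤ (1 / p 0 + S) + (u ⊓ i) := hy
          _ ≤ (u + S) + i := add_le_add (add_le_add (le_max_right _ _) le_rfl) inf_le_right
          _ = u + (S + i) := add_assoc _ _ _
      exact (ENNReal.add_le_add_iff_left hune).mp h2
    have hSi_ne : S + i ≠ ∞ := ENNReal.add_ne_top.mpr ⟨hSne, hine⟩
    have hiρ_ne : (S + i) - Y ≠ ∞ := (lt_of_le_of_lt tsub_le_self hSi_ne.lt_top).ne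
    have hρpos : (0:ℝ≥0∞) < 1 / ((S + i) - Y) := by
      rw [one_div]; exact ENNReal.inv_pos.mpr hiρ_ne
    have h1ρ : 1 / (1 / ((S + i) - Y)) = (S + i) - Y := by
      rw [one_div, one_div, inv_inv]
    -- IH
    have hIH := young_enn N (fun j => p j.succ) (1 / ((S + i) - Y)) hti hρpos
      (by
        rw [h1ρ, ← hY, ← hS, ← hi, tsub_add_cancel_of_le hYX])
      (fun j => F j.succ)
    -- binary hypothesis
    have h1ρ_le_i : 1 / (1 / ((S + i) - Y)) ≤ i := by
      rw [h1ρ, tsub_le_iff_right]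
      calc S + i ≤ Y + i := add_le_add hSY le_rfl
        _ = i + Y := add_comm _ _
    have hmaxρ : max 1 (1 / (1 / ((S + i) - Y))) ≤ i := max_le h1i h1ρ_le_i
    have hkey2 : 1 / p₀ + max u i ≤ 1 / p 0 + ((S + i) - Y) := by
      have hkey : (1 / p₀ + max u i) + ((u ⊓ i) + Y)
          ≤ (1 / p 0 + ((S + i) - Y)) + ((u ⊓ i) + Y) := by
        have e1 : (1 / p₀ + max u i) + ((u ⊓ i) + Y) = (1 / p₀ + (u + Y)) + i := by
          have := max_add_min' u i
          calc (1 / p₀ + max u i) + ((u ⊓ i) + Y)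
              = 1 / p₀ + (max u i + u ⊓ i) + Y := by ring
            _ = 1 / p₀ + (u + i) + Y := by rw [this]
            _ = (1 / p₀ + (u + Y)) + i := by ring
        have e2 : (1 / p 0 + ((S + i) - Y)) + ((u ⊓ i) + Y)
            = (1 / p 0 + (S + i)) + (u ⊓ i) := by
          have h3 : ((S + i) - Y) + Y = S + i := tsub_add_cancel_of_le hYX
          calc (1 / p 0 + ((S + i) - Y)) + ((u ⊓ i) + Y)
              = (1 / p 0 + (((S + i) - Y) + Y)) + (u ⊓ i) := by ring
            _ = (1 / p 0 + (S + i)) + (u ⊓ i) := by rw [h3]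
        rw [e1, e2]
        calc (1 / p₀ + (u + Y)) + i ≤ ((1 / p 0 + S) + (u ⊓ i)) + i := add_le_add hy le_rfl
          _ = (1 / p 0 + (S + i)) + (u ⊓ i) := by ring
      have hne : (u ⊓ i) + Y ≠ ∞ :=
        ENNReal.add_ne_top.mpr ⟨((min_le_left u i).trans_lt hune.lt_top).ne, hYne⟩
      exact (ENNReal.add_le_add_iff_right hne).mp hkey
    have Hb : 1 / p₀ + max (max 1 (1 / p 0)) (max 1 (1 / (1 / ((S + i) - Y))))
        ≤ 1 / p 0 + 1 / (1 / ((S + i) - Y)) := by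
      rw [h1ρ]
      refine le_trans (add_le_add le_rfl ?_) hkey2
      rw [← h1ρ]
      exact max_le (le_max_left _ _) (hmaxρ.trans (le_max_right _ _))
    calc eQ p₀ (econv (N + 1) F)
        ≤ eQ (p 0) (F 0) * eQ (1 / ((S + i) - Y)) (econv N fun j => F j.succ) :=
          binary (F 0) (econv N fun j => F j.succ) (hp 0) hρpos hp₀ Hb
      _ ≤ eQ (p 0) (F 0) * ∏ j : Fin (N + 1), eQ (p j.succ) (F j.succ) :=
          mul_le_mul_right hIH _
      _ = ∏ j, eQ (p j) (F j) :=
          (Fin.prod_univ_succ (fun j : Fin (N + 2) => eQ (p j) (F j))).symm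

theorem enn_nnnorm_tsum_le (v : α → ℂ) :
    (‖∑' i, v i‖₊ : ℝ≥0∞) ≤ ∑' i, (‖v i‖₊ : ℝ≥0∞) := by
  by_cases h2 : Summable fun i => ‖v i‖₊
  · calc (‖∑' i, v i‖₊ : ℝ≥0∞) ≤ ((∑' i, ‖v i‖₊ : ℝ≥0) : ℝ≥0∞) :=
        ENNReal.coe_le_coe.mpr (nnnorm_tsum_le h2)
      _ = ∑' i, (‖v i‖₊ : ℝ≥0∞) := ENNReal.coe_tsum h2
  · have htop : ∑' i, (‖v i‖₊ : ℝ≥0∞) = ∞ := by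
      by_contra h3
      exact h2 (ENNReal.tsum_coe_ne_top_iff_summable.mp h3)
    rw [htop]
    exact le_top

theorem nconv_le_econv : ∀ (N : ℕ) (a : Fin (N + 1) → G → ℂ) (k : G),
    (‖nconv N a k‖₊ : ℝ≥0∞) ≤ econv N (fun j x => (‖a j x‖₊ : ℝ≥0∞)) k
  | 0, a, k => le_rfl
  | (n + 1), a, k => by
    calc (‖nconv (n + 1) a k‖₊ : ℝ≥0∞)
        = (‖∑' j, a 0 j * nconv n (fun i => a i.succ) (k - j)‖₊ : ℝ≥0∞) := rfl
      _ ≤ ∑' j, (‖a 0 j * nconv n (fun i => a i.succ) (k - j)‖₊ : ℝ≥0∞) :=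
          enn_nnnorm_tsum_le _
      _ ≤ ∑' j, (‖a 0 j‖₊ : ℝ≥0∞) *
            econv n (fun i x => (‖a i.succ x‖₊ : ℝ≥0∞)) (k - j) := by
          refine ENNReal.tsum_le_tsum fun j => ?_
          rw [nnnorm_mul, ENNReal.coe_mul]
          exact mul_le_mul_right (nconv_le_econv n (fun i => a i.succ) (k - j)) _
      _ = econv (n + 1) (fun j x => (‖a j x‖₊ : ℝ≥0∞)) k := rfl

/-- Bridge: membership in `ℓ^p` is finiteness of `eQ`. -/
theorem memlp_iff_eQ (f : α → ℂ) {p : ℝ≥0∞} (hp : 0 < p) :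
    Memℓp f p ↔ eQ p (fun x => (‖f x‖₊ : ℝ≥0∞)) ≠ ∞ := by
  by_cases hpt : p = ∞
  · subst hpt
    rw [eQ_top, memℓp_infty_iff]
    constructor
    · rintro ⟨C, hC⟩
      refine (lt_of_le_of_lt (iSup_le fun x => ?_) (ENNReal.ofReal_lt_top (r := C))).ne
      rw [show (‖f x‖₊ : ℝ≥0∞) = ENNReal.ofReal ‖f x‖ from (ENNReal.ofReal_eq_coe_nnreal (norm_nonneg (f x))).symm]
      exact ENNReal.ofReal_le_ofReal (hC ⟨x, rfl⟩)
    · intro hS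
      refine ⟨(⨆ x, (‖f x‖₊ : ℝ≥0∞)).toReal, ?_⟩
      rintro y ⟨x, rfl⟩
      have h1 : (‖f x‖₊ : ℝ≥0∞) ≤ ⨆ x, (‖f x‖₊ : ℝ≥0∞) := le_iSup (fun x => (‖f x‖₊ : ℝ≥0∞)) x
      have h2 := ENNReal.toReal_mono hS h1
      simpa using h2
  · have ht : 0 < p.toReal := ENNReal.toReal_pos hp.ne' hpt
    rw [memℓp_gen_iff ht, eQ_ne_top hpt]
    have hrw : ∀ x, (‖f x‖₊ : ℝ≥0∞) ^ p.toReal = ((‖f x‖₊ ^ p.toReal : ℝ≥0) : ℝ≥0∞) :=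
      fun x => (ENNReal.coe_rpow_of_nonneg _ ht.le).symm
    have hsum : (∑' x, (‖f x‖₊ : ℝ≥0∞) ^ p.toReal) =
        ∑' x, ((‖f x‖₊ ^ p.toReal : ℝ≥0) : ℝ≥0∞) := tsum_congr hrw
    rw [hsum]
    rw [ne_eq, ENNReal.rpow_eq_top_iff_of_pos (by positivity), ← ne_eq,
      ENNReal.tsum_coe_ne_top_iff_summable, ← NNReal.summable_coe]
    have : ∀ x, ((‖f x‖₊ ^ p.toReal : ℝ≥0) : ℝ) = ‖f x‖ ^ p.toReal := by
      intro x
      rw [NNReal.coe_rpow, coe_nnnorm]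
    exact summable_congr fun x => by rw [this x]

/-- Bridge: `lqnorm` is the `toReal` of `eQ`. -/
theorem lqnorm_eq_eQ (f : α → ℂ) {p : ℝ≥0∞} (hp : 0 < p) :
    lqnorm p f = (eQ p (fun x => (‖f x‖₊ : ℝ≥0∞))).toReal := by
  by_cases hpt : p = ∞
  · subst hpt
    rw [eQ_top]
    rw [show lqnorm ∞ f = ⨆ j, ‖f j‖ from if_pos rfl]
    rw [ENNReal.toReal_iSup (fun x => ENNReal.coe_ne_top)]
    simp
  · have ht : 0 < p.toReal := ENNReal.toReal_pos hp.ne' hpt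
    rw [eQ_ne_top hpt]
    rw [show lqnorm p f = (∑' j, ‖f j‖ ^ p.toReal) ^ (1 / p.toReal) from if_neg hpt]
    rw [← ENNReal.toReal_rpow]
    congr 1
    rw [ENNReal.tsum_toReal_eq (fun x => by
      rw [← ENNReal.coe_rpow_of_nonneg _ ht.le]; exact ENNReal.coe_ne_top)]
    refine tsum_congr fun x => ?_
    rw [← ENNReal.coe_rpow_of_nonneg _ ht.le, ENNReal.coe_toReal, NNReal.coe_rpow, coe_nnnorm]

end YoungAux

/-- `N`-fold Young inequality on a lattice for quasi-Banach exponents.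
The hypothesis `1/p₀ ≤ ∑ 1/p_j − R_N(p₁,…,p_N)`, with
`R_N = (∑ max(1, 1/p_j)) − min_j max(1, 1/p_j)`, is stated additively in `ℝ≥0∞`. -/
theorem young_nfold_quasi {d : ℕ} (Λ : AddSubgroup (Fin d → ℝ))
    [DiscreteTopology Λ] (N : ℕ) (p : Fin (N + 1) → ℝ≥0∞) (p₀ : ℝ≥0∞)
    (hp : ∀ j, 0 < p j) (hp₀ : 0 < p₀)
    (hyoung : 1 / p₀ + ∑ j, max 1 (1 / p j)
        ≤ (∑ j, 1 / p j) + ⨅ j, max 1 (1 / p j))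
    (a : Fin (N + 1) → (↥Λ → ℂ))
    (ha : ∀ j, Memℓp (a j) (p j)) :
    Memℓp (nconv N a) p₀ ∧
      lqnorm p₀ (nconv N a) ≤ ∏ j, lqnorm (p j) (a j) := by
  classical
  open YoungAux in
  have hFfin : ∀ j, eQ (p j) (fun x => ((‖a j x‖₊ : ℝ≥0∞))) ≠ ∞ :=
    fun j => (memlp_iff_eQ (a j) (hp j)).mp (ha j)
  have hmain := YoungAux.young_enn N p p₀ hp hp₀ hyoung
    (fun j x => ((‖a j x‖₊ : ℝ≥0∞)))
  have hpt : eQ p₀ (fun k => ((‖nconv N a k‖₊ : ℝ≥0∞)))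
      ≤ ∏ j, eQ (p j) (fun x => ((‖a j x‖₊ : ℝ≥0∞))) :=
    le_trans (eQ_mono (fun k => nconv_le_econv N a k)) hmain
  have hprod_ne : (∏ j, eQ (p j) (fun x => ((‖a j x‖₊ : ℝ≥0∞)))) ≠ ∞ :=
    ENNReal.prod_ne_top fun j _ => hFfin j
  constructor
  · rw [memlp_iff_eQ _ hp₀]
    exact (lt_of_le_of_lt hpt hprod_ne.lt_top).ne
  · rw [lqnorm_eq_eQ _ hp₀]
    calc (eQ p₀ (fun k => ((‖nconv N a k‖₊ : ℝ≥0∞)))).toReal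
        ≤ (∏ j, eQ (p j) (fun x => ((‖a j x‖₊ : ℝ≥0∞)))).toReal :=
          ENNReal.toReal_mono hprod_ne hpt
      _ = ∏ j, (eQ (p j) (fun x => ((‖a j x‖₊ : ℝ≥0∞)))).toReal := ENNReal.toReal_prod _ _
      _ = ∏ j, lqnorm (p j) (a j) :=
          Finset.prod_congr rfl fun j _ => (lqnorm_eq_eQ (a j) (hp j)).symm
end

section
/- Let Λ be a lattice in ℝ^d, p₁, p₂ ∈ (0,∞] with p₂ ≤ p₁ and p₂ < 1. Then for all a ∈ ℓ^{p₁}(Λ) and b ∈ ℓ^{p₂}(Λ), the convolution a*b belongs to ℓ^{p₁}(Λ) and ‖a*b‖_{ℓ^{p₁}} ≤ ‖a‖_{ℓ^{p₁}} ‖b‖_{ℓ^{p₂}}. -/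
open scoped BigOperators ENNReal
open scoped NNReal

/-- Convolution of sequences on a discrete additive group. -/
noncomputable def dconv {G : Type*} [AddCommGroup G] (a b : G → ℂ) : G → ℂ :=
  fun k => ∑' j, a j * b (k - j)

-- p-subadditivity for finset sums in ENNReal
lemma aux_finset_rpow_sum_le {ι : Type*} (s : Finset ι) (f : ι → ℝ≥0∞) {p : ℝ}
    (hp : 0 < p) (hp1 : p ≤ 1) :
    (∑ i ∈ s, f i) ^ p ≤ ∑ i ∈ s, f i ^ p := by
  classical
  induction s using Finset.induction with
  | empty => simp [ENNReal.zero_rpow_of_pos hp]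
  | insert _ _ h ih =>
    rw [Finset.sum_insert h, Finset.sum_insert h]
    exact (ENNReal.rpow_add_le_add_rpow _ _ hp.le hp1).trans (by gcongr)

-- p-subadditivity for tsum in ENNReal
lemma aux_tsum_rpow_le {ι : Type*} (f : ι → ℝ≥0∞) {p : ℝ} (hp : 0 < p) (hp1 : p ≤ 1) :
    (∑' i, f i) ^ p ≤ ∑' i, f i ^ p := by
  have h1p : 0 < 1 / p := by positivity
  rw [← ENNReal.rpow_le_rpow_iff h1p, ← ENNReal.rpow_mul, mul_one_div, div_self hp.ne',
    ENNReal.rpow_one]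
  rw [ENNReal.tsum_eq_iSup_sum]
  refine iSup_le fun s => ?_
  have h2 : (∑ i ∈ s, f i) ≤ (∑ i ∈ s, f i ^ p) ^ (1 / p) := by
    rw [← ENNReal.rpow_le_rpow_iff hp, ← ENNReal.rpow_mul, one_div, inv_mul_cancel₀ hp.ne',
      ENNReal.rpow_one]
    exact aux_finset_rpow_sum_le s f hp hp1
  exact h2.trans (ENNReal.rpow_le_rpow (ENNReal.sum_le_tsum s) h1p.le)

-- Hölder for tsum in ENNReal
lemma aux_tsum_inner_le_Lp_mul_Lq {ι : Type*} (f g : ι → ℝ≥0∞) {p q : ℝ}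
    (hpq : p.HolderConjugate q) :
    ∑' i, f i * g i ≤ (∑' i, f i ^ p) ^ (1 / p) * (∑' i, g i ^ q) ^ (1 / q) := by
  rw [ENNReal.tsum_eq_iSup_sum]
  refine iSup_le fun s => (ENNReal.inner_le_Lp_mul_Lq s f g hpq).trans ?_
  exact mul_le_mul' (ENNReal.rpow_le_rpow (ENNReal.sum_le_tsum s) hpq.one_div_pos.le)
    (ENNReal.rpow_le_rpow (ENNReal.sum_le_tsum s) hpq.symm.one_div_pos.le)

-- monotonicity of ℓ^p norms in ENNReal
lemma aux_lp_mono {ι : Type*} (G : ι → ℝ≥0∞) {p q : ℝ} (hq : 0 < q) (hqp : q ≤ p) :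
    ∑' i, G i ^ p ≤ ((∑' i, G i ^ q) ^ (1 / q)) ^ p := by
  set T := (∑' i, G i ^ q) ^ (1 / q) with hT
  have hTq : T ^ q = ∑' i, G i ^ q := by
    rw [hT, ← ENNReal.rpow_mul, one_div, inv_mul_cancel₀ hq.ne', ENNReal.rpow_one]
  have hle : ∀ i, G i ≤ T := by
    intro i
    rw [hT, ← ENNReal.rpow_le_rpow_iff hq, hTq]
    exact ENNReal.le_tsum i
  calc ∑' i, G i ^ p = ∑' i, G i ^ q * G i ^ (p - q) := by
        refine tsum_congr fun i => ?_
        rw [← ENNReal.rpow_add_of_nonneg _ _ hq.le (by linarith : (0:ℝ) ≤ p - q),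
          add_sub_cancel]
    _ ≤ ∑' i, G i ^ q * T ^ (p - q) :=
        ENNReal.tsum_le_tsum fun i =>
          mul_le_mul_right (ENNReal.rpow_le_rpow (hle i) (by linarith)) _
    _ = (∑' i, G i ^ q) * T ^ (p - q) := ENNReal.tsum_mul_right
    _ = T ^ p := by
        rw [← hTq, ← ENNReal.rpow_add_of_nonneg _ _ hq.le (by linarith : (0:ℝ) ≤ p - q),
          add_sub_cancel]

-- Fubini-style computation for convolutions in ENNReal
lemma aux_conv_tsum {ι : Type*} [AddCommGroup ι] (u v : ι → ℝ≥0∞) :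
    ∑' k, ∑' j, u j * v (k - j) = (∑' j, u j) * (∑' j, v j) := by
  rw [ENNReal.tsum_comm]
  calc ∑' j, ∑' k, u j * v (k - j)
      = ∑' j, u j * ∑' k, v (k - j) := by simp_rw [ENNReal.tsum_mul_left]
    _ = ∑' j, u j * ∑' k, v k := by
        refine tsum_congr fun j => ?_
        congr 1
        exact (Equiv.subRight j).tsum_eq v
    _ = (∑' j, u j) * (∑' j, v j) := ENNReal.tsum_mul_right

lemma aux_tsum_norm_rpow {ι : Type*} (f : ι → ℂ) {p : ℝ} (hp : 0 ≤ p) :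
    ∑' j, ‖f j‖ ^ p = (∑' j, (‖f j‖₊ : ℝ≥0∞) ^ p).toReal := by
  rw [ENNReal.tsum_toReal_eq (fun j => ENNReal.rpow_ne_top_of_nonneg hp ENNReal.coe_ne_top)]
  refine tsum_congr fun j => ?_
  rw [← ENNReal.coe_rpow_of_nonneg _ hp, ENNReal.coe_toReal, NNReal.coe_rpow, coe_nnnorm]

lemma aux_summable_norm_rpow {ι : Type*} (f : ι → ℂ) {p : ℝ} (hp : 0 ≤ p)
    (h : ∑' j, (‖f j‖₊ : ℝ≥0∞) ^ p ≠ ⊤) : Summable (fun j => ‖f j‖ ^ p) := by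
  have h2 : Summable (fun j : ι => HPow.hPow (‖f j‖₊) p) := by
    rw [← ENNReal.tsum_coe_ne_top_iff_summable]
    simpa only [ENNReal.coe_rpow_of_nonneg _ hp] using h
  have := NNReal.summable_coe.mpr h2
  simpa only [NNReal.coe_rpow, coe_nnnorm] using this

lemma aux_tsum_ne_top {ι : Type*} (f : ι → ℂ) {p : ℝ} (hp : 0 ≤ p)
    (h : Summable (fun j => ‖f j‖ ^ p)) : ∑' j, (‖f j‖₊ : ℝ≥0∞) ^ p ≠ ⊤ := by
  have h2 : Summable (fun j : ι => HPow.hPow (‖f j‖₊) p) := by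
    rw [← NNReal.summable_coe]
    simpa only [NNReal.coe_rpow, coe_nnnorm] using h
  simpa only [ENNReal.coe_rpow_of_nonneg _ hp] using
    ENNReal.tsum_coe_ne_top_iff_summable.mpr h2

/-- two-factor base case of the quasi-Banach Young inequality on a lattice. -/
theorem young_two_factor_quasi {d : ℕ} (Λ : AddSubgroup (Fin d → ℝ))
    [DiscreteTopology Λ] (p₁ p₂ : ℝ≥0∞)
    (hp₂pos : 0 < p₂) (hp₂₁ : p₂ ≤ p₁) (hp₂ : p₂ < 1)
    (a b : ↥Λ → ℂ) (ha : Memℓp a p₁) (hb : Memℓp b p₂) :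
    Memℓp (dconv a b) p₁ ∧
      lqnorm p₁ (dconv a b) ≤ lqnorm p₁ a * lqnorm p₂ b := by
  haveI : Nonempty ↥Λ := ⟨0⟩
  have hp₂top : p₂ ≠ ∞ := (hp₂.trans ENNReal.one_lt_top).ne
  set q : ℝ := p₂.toReal with hqdef
  have hq0 : 0 < q := ENNReal.toReal_pos hp₂pos.ne' hp₂top
  have hq1 : q < 1 := by
    have := (ENNReal.toReal_lt_toReal hp₂top ENNReal.one_ne_top).mpr hp₂
    simpa using this
  set G : ↥Λ → ℝ≥0∞ := fun j => (‖b j‖₊ : ℝ≥0∞) with hGdef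
  set Tb : ℝ≥0∞ := (∑' j, G j ^ q) ^ (1 / q) with hTbdef
  have hbs : Summable fun j => ‖b j‖ ^ q := hb.summable hq0
  have hSGq_ne_top : (∑' j, G j ^ q) ≠ ⊤ := aux_tsum_ne_top b hq0.le hbs
  have hTb_ne_top : Tb ≠ ⊤ :=
    ENNReal.rpow_ne_top_of_nonneg (by positivity) hSGq_ne_top
  have hlqb : lqnorm p₂ b = Tb.toReal := by
    rw [lqnorm, if_neg hp₂top, aux_tsum_norm_rpow b hq0.le, ENNReal.toReal_rpow]
  -- ℓ¹ bound on G
  have hG1 : (∑' j, G j) ≤ Tb := by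
    have h := aux_lp_mono G hq0 hq1.le
    simp only [ENNReal.rpow_one] at h
    exact h
  rcases eq_or_ne p₁ ∞ with hp1 | hp1top
  · -- case p₁ = ∞
    subst hp1
    have hA : BddAbove (Set.range fun i => ‖a i‖) := memℓp_infty_iff.mp ha
    set A : ℝ := ⨆ j, ‖a j‖ with hAdef
    have hAle : ∀ j, ‖a j‖ ≤ A := fun j => le_ciSup hA j
    have hA0 : 0 ≤ A := le_trans (norm_nonneg (a 0)) (hAle 0)
    -- b is summable in norm
    have hbs1 : Summable fun j => ‖b j‖ := by
      have hb1 : Memℓp b 1 := hb.of_exponent_ge hp₂.le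
      have := hb1.summable (by simp)
      simpa using this
    have hsum_b_le : (∑' j, ‖b j‖) ≤ Tb.toReal := by
      have h1 : (∑' j, ‖b j‖) = (∑' j, G j).toReal := by
        have := aux_tsum_norm_rpow b (le_of_lt one_pos)
        simpa [Real.rpow_one, ENNReal.rpow_one] using this
      rw [h1]
      exact ENNReal.toReal_mono hTb_ne_top hG1
    have key : ∀ k, ‖dconv a b k‖ ≤ A * Tb.toReal := by
      intro k
      have hsb : Summable fun j => ‖b (k - j)‖ :=
        ((Equiv.subLeft k).summable_iff (f := fun j => ‖b j‖)).mpr hbs1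
      have hptle : ∀ j, ‖a j * b (k - j)‖ ≤ A * ‖b (k - j)‖ := fun j => by
        rw [norm_mul]
        exact mul_le_mul_of_nonneg_right (hAle j) (norm_nonneg _)
      have hsn : Summable fun j => ‖a j * b (k - j)‖ :=
        Summable.of_nonneg_of_le (fun j => norm_nonneg _) hptle (hsb.mul_left A)
      calc ‖dconv a b k‖ ≤ ∑' j, ‖a j * b (k - j)‖ := norm_tsum_le_tsum_norm hsn
        _ ≤ ∑' j, A * ‖b (k - j)‖ := Summable.tsum_le_tsum hptle hsn (hsb.mul_left A)
        _ = A * ∑' j, ‖b (k - j)‖ := tsum_mul_left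
        _ = A * ∑' j, ‖b j‖ := by
            congr 1
            exact (Equiv.subLeft k).tsum_eq (fun j => ‖b j‖)
        _ ≤ A * Tb.toReal := mul_le_mul_of_nonneg_left hsum_b_le hA0
    constructor
    · exact memℓp_infty ⟨A * Tb.toReal, by rintro x ⟨k, rfl⟩; exact key k⟩
    · rw [lqnorm, if_pos rfl, lqnorm, if_pos rfl, hlqb]
      exact ciSup_le key
  · -- case p₁ < ∞
    set p : ℝ := p₁.toReal with hpdef
    have hp0 : 0 < p := ENNReal.toReal_pos (hp₂pos.trans_le hp₂₁).ne' hp1top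
    have hqp : q ≤ p := ENNReal.toReal_mono hp1top hp₂₁
    set F : ↥Λ → ℝ≥0∞ := fun j => (‖a j‖₊ : ℝ≥0∞) with hFdef
    set Sa : ℝ≥0∞ := ∑' j, F j ^ p with hSadef
    have has : Summable fun j => ‖a j‖ ^ p := ha.summable hp0
    have hSa_ne_top : Sa ≠ ⊤ := aux_tsum_ne_top a hp0.le has
    set Ta : ℝ≥0∞ := Sa ^ (1 / p) with hTadef
    have hTa_ne_top : Ta ≠ ⊤ := ENNReal.rpow_ne_top_of_nonneg (by positivity) hSa_ne_top
    have hlqa : lqnorm p₁ a = Ta.toReal := by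
      rw [lqnorm, if_neg hp1top, aux_tsum_norm_rpow a hp0.le, ENNReal.toReal_rpow]
    set S : ↥Λ → ℝ≥0∞ := fun k => ∑' j, F j * G (k - j) with hSdef
    -- key estimate
    have hmain : (∑' k, S k ^ p) ≤ Sa * Tb ^ p := by
      rcases le_or_gt p 1 with hple | hpgt
      · -- p ≤ 1
        calc (∑' k, S k ^ p) ≤ ∑' k, ∑' j, (F j * G (k - j)) ^ p :=
              ENNReal.tsum_le_tsum fun k => aux_tsum_rpow_le _ hp0 hple
          _ = ∑' k, ∑' j, F j ^ p * G (k - j) ^ p := by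
              refine tsum_congr fun k => tsum_congr fun j => ?_
              exact ENNReal.mul_rpow_of_nonneg _ _ hp0.le
          _ = (∑' j, F j ^ p) * (∑' j, G j ^ p) :=
              aux_conv_tsum (fun j => F j ^ p) (fun j => G j ^ p)
          _ ≤ Sa * Tb ^ p := mul_le_mul_right (aux_lp_mono G hq0 hqp) _
      · -- 1 < p
        have hpc : p.HolderConjugate (Real.conjExponent p) :=
          Real.HolderConjugate.conjExponent hpgt
        set pc : ℝ := Real.conjExponent p with hpcdef
        have hpc0 : 0 < pc := hpc.symm.pos
        have hppc : p / pc = p - 1 := hpc.div_conj_eq_sub_one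
        have hstep : ∀ k, S k ^ p ≤ (∑' j, F j ^ p * G (k - j)) * (∑' j, G j) ^ (p - 1) := by
          intro k
          have hG_split : ∀ j, F j * G (k - j)
              = (F j * G (k - j) ^ (1 / p)) * G (k - j) ^ (1 / pc) := by
            intro j
            rw [mul_assoc, ← ENNReal.rpow_add_of_nonneg _ _ (by positivity) (by positivity)]
            rw [show 1 / p + 1 / pc = 1 by
              rw [one_div, one_div]; exact hpc.inv_add_inv_eq_one]
            rw [ENNReal.rpow_one]
          have hH : S k ≤ (∑' j, (F j * G (k - j) ^ (1 / p)) ^ p) ^ (1 / p) *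
              (∑' j, (G (k - j) ^ (1 / pc)) ^ pc) ^ (1 / pc) := by
            rw [hSdef]
            simp only [hG_split]
            exact aux_tsum_inner_le_Lp_mul_Lq _ _ hpc
          have e1 : ∀ j, (F j * G (k - j) ^ (1 / p)) ^ p = F j ^ p * G (k - j) := by
            intro j
            rw [ENNReal.mul_rpow_of_nonneg _ _ hp0.le, ← ENNReal.rpow_mul,
              one_div, inv_mul_cancel₀ hp0.ne', ENNReal.rpow_one]
          have e2 : ∀ j, (G (k - j) ^ (1 / pc)) ^ pc = G (k - j) := by
            intro j
            rw [← ENNReal.rpow_mul, one_div, inv_mul_cancel₀ hpc0.ne', ENNReal.rpow_one]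
          simp only [e1, e2] at hH
          have hGk : (∑' j, G (k - j)) = ∑' j, G j := (Equiv.subLeft k).tsum_eq G
          rw [hGk] at hH
          calc S k ^ p ≤ ((∑' j, F j ^ p * G (k - j)) ^ (1 / p) *
                (∑' j, G j) ^ (1 / pc)) ^ p := ENNReal.rpow_le_rpow hH hp0.le
            _ = (∑' j, F j ^ p * G (k - j)) * (∑' j, G j) ^ (p - 1) := by
                rw [ENNReal.mul_rpow_of_nonneg _ _ hp0.le, ← ENNReal.rpow_mul,
                  ← ENNReal.rpow_mul, one_div, inv_mul_cancel₀ hp0.ne', ENNReal.rpow_one,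
                  one_div, inv_mul_eq_div, ← hppc]
        calc (∑' k, S k ^ p)
            ≤ ∑' k, (∑' j, F j ^ p * G (k - j)) * (∑' j, G j) ^ (p - 1) :=
              ENNReal.tsum_le_tsum hstep
          _ = (∑' k, ∑' j, F j ^ p * G (k - j)) * (∑' j, G j) ^ (p - 1) :=
              ENNReal.tsum_mul_right
          _ = Sa * (∑' j, G j) * (∑' j, G j) ^ (p - 1) := by
              rw [aux_conv_tsum (fun j => F j ^ p) G]
          _ = Sa * (∑' j, G j) ^ p := by
              rw [mul_assoc]
              congr 1
              nth_rewrite 1 [← ENNReal.rpow_one (∑' j, G j)]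
              rw [← ENNReal.rpow_add_of_nonneg _ _ zero_le_one (by linarith)]
              norm_num
          _ ≤ Sa * Tb ^ p :=
              mul_le_mul_right (ENNReal.rpow_le_rpow hG1 hp0.le) _
    have hRHS_ne_top : Sa * Tb ^ p ≠ ⊤ :=
      ENNReal.mul_ne_top hSa_ne_top (ENNReal.rpow_ne_top_of_nonneg hp0.le hTb_ne_top)
    have hS_ne_top : (∑' k, S k ^ p) ≠ ⊤ := ne_top_of_le_ne_top hRHS_ne_top hmain
    have hSk_ne_top : ∀ k, S k ≠ ⊤ := by
      intro k hk
      apply hS_ne_top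
      have h1 : S k ^ p ≤ ∑' k, S k ^ p := ENNReal.le_tsum k
      rw [hk, ENNReal.top_rpow_of_pos hp0] at h1
      exact top_le_iff.mp h1
    -- pointwise domination of the convolution
    have hD : ∀ k, (‖dconv a b k‖₊ : ℝ≥0∞) ≤ S k := by
      intro k
      have hcoe : ∀ j, ((‖a j * b (k - j)‖₊ : ℝ≥0) : ℝ≥0∞) = F j * G (k - j) := by
        intro j
        rw [nnnorm_mul, ENNReal.coe_mul]
      have hsum_ne : (∑' j, ((‖a j * b (k - j)‖₊ : ℝ≥0) : ℝ≥0∞)) ≠ ⊤ := by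
        simpa only [hcoe] using hSk_ne_top k
      have hnn : Summable fun j => ‖a j * b (k - j)‖₊ :=
        ENNReal.tsum_coe_ne_top_iff_summable.mp hsum_ne
      calc (‖dconv a b k‖₊ : ℝ≥0∞) ≤ ((∑' j, ‖a j * b (k - j)‖₊ : ℝ≥0) : ℝ≥0∞) := by
            exact_mod_cast nnnorm_tsum_le hnn
        _ = ∑' j, ((‖a j * b (k - j)‖₊ : ℝ≥0) : ℝ≥0∞) := ENNReal.coe_tsum hnn
        _ = S k := tsum_congr hcoe
    have hDsum : (∑' k, (‖dconv a b k‖₊ : ℝ≥0∞) ^ p) ≤ Sa * Tb ^ p := by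
      refine le_trans (ENNReal.tsum_le_tsum fun k => ?_) hmain
      exact ENNReal.rpow_le_rpow (hD k) hp0.le
    have hDsum_ne_top : (∑' k, (‖dconv a b k‖₊ : ℝ≥0∞) ^ p) ≠ ⊤ :=
      ne_top_of_le_ne_top hRHS_ne_top hDsum
    constructor
    · exact memℓp_gen (aux_summable_norm_rpow (dconv a b) hp0.le hDsum_ne_top)
    · have hfinal : (∑' k, (‖dconv a b k‖₊ : ℝ≥0∞) ^ p) ^ (1 / p) ≤ Ta * Tb := by
        have h2 : (Sa * Tb ^ p) ^ (1 / p) = Ta * Tb := by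
          rw [ENNReal.mul_rpow_of_nonneg _ _ (by positivity), ← ENNReal.rpow_mul,
            mul_one_div, div_self hp0.ne', ENNReal.rpow_one]
        rw [← h2]
        exact ENNReal.rpow_le_rpow hDsum (by positivity)
      rw [lqnorm, if_neg hp1top, aux_tsum_norm_rpow (dconv a b) hp0.le,
        ENNReal.toReal_rpow, hlqa, hlqb, ← ENNReal.toReal_mul]
      exact ENNReal.toReal_mono (ENNReal.mul_ne_top hTa_ne_top hTb_ne_top) hfinal
end
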